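/- Let a and b be coprime positive integers and let μ ∈ R(a,b). Then no cell c of the Young diagram of μ satisfies a·arm(c) − b·leg(c) = −a or a·arm(c) − b·leg(c) = b; consequently h⁺_{b,a}(μ) = h⁻_{b,a}(μ). -/

import Mathlib

/-- `μ : ℕ → ℕ` represents a partition in `R(a,b)`: the value `μ i` is the
`(i+1)`-th part; the parts are weakly decreasing, at most `b`, and zero from
index `a` on (so the Young diagram of `μ` fits in an `a × b` box). -/
def InBox (a b : ℕ) (μ : ℕ → ℕ) : Prop :=
  (∀ i j : ℕ, i ≤ j → μ j ≤ μ i) ∧ μ 0 ≤ b ∧ ∀ i, a ≤ i → μ i = 0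

/-- `μ ∈ D(a,b)`: `μ ∈ R(a,b)` and `a·μ_j ≤ b·(a−j)` for all (1-indexed) `j`;
in terms of the 0-indexed parts this reads `a·μ(i) ≤ b·(a−1−i)`. -/
def InTriangle (a b : ℕ) (μ : ℕ → ℕ) : Prop :=
  InBox a b μ ∧ ∀ i, i < a → a * μ i ≤ b * (a - 1 - i)

/-- The leg of the cell in (0-indexed) row `i`, column `j` of the Young diagram
of `μ`: the number of cells strictly below it in its column. -/
noncomputable def leg (μ : ℕ → ℕ) (i j : ℕ) : ℕ :=
  {i' : ℕ | i < i' ∧ j < μ i'}.ncard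

/-- The arm of the cell in row `i`, column `j` (as an integer): the number of
cells strictly to its right in its row. -/
def armZ (μ : ℕ → ℕ) (i j : ℕ) : ℤ := (μ i : ℤ) - 1 - j

/-- `h⁺_{b,a}(μ)`: the number of cells `c` of `μ` with
`−a < a·arm(c) − b·leg(c) ≤ b`. -/
noncomputable def hplus (a b : ℕ) (μ : ℕ → ℕ) : ℕ :=
  {c : ℕ × ℕ | c.2 < μ c.1 ∧
    -(a : ℤ) < (a : ℤ) * armZ μ c.1 c.2 - (b : ℤ) * leg μ c.1 c.2 ∧
    (a : ℤ) * armZ μ c.1 c.2 - (b : ℤ) * leg μ c.1 c.2 ≤ (b : ℤ)}.ncard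

/-- The frontier of `μ ∈ R(a,b)`: the lattice word from `(0,0)` to `(b,a)`
(`true` = N, `false` = E) tracing the boundary of the diagram of `μ` inside the
`a × b` box; its `j`-th N (from the start) is preceded by exactly `μ_{a+1−j}` E's. -/
def frontierWord (a b : ℕ) (μ : ℕ → ℕ) : List Bool :=
  ((List.range a).flatMap fun y =>
    List.replicate (μ (a - 1 - y) - μ (a - y)) false ++ [true]) ++
  List.replicate (b - μ 0) false

/-- The level `l_i = b·(#N) − a·(#E)` of the lattice point reached after the
first `i` steps of the word `w` (with `true` = N, `false` = E). -/
def levelAt (a b : ℕ) (w : List Bool) (i : ℕ) : ℤ :=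
  (b : ℤ) * (w.take i).count true - (a : ℤ) * (w.take i).count false

/-- `ml_{b,a}`: the minimum of the levels `l_0, l_1, …, l_{length w}` along `w`. -/
def minLevel (a b : ℕ) (w : List Bool) : ℤ :=
  ((Finset.range (w.length + 1)).image fun i => levelAt a b w i).min'
    (Finset.Nonempty.image ⟨0, Finset.mem_range.mpr (Nat.succ_pos _)⟩ _)

/-- `h⁻_{b,a}(μ)`: the number of cells `c` of `μ` with
`−a ≤ a·arm(c) − b·leg(c) < b`. -/
noncomputable def hminus (a b : ℕ) (μ : ℕ → ℕ) : ℕ :=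
  {c : ℕ × ℕ | c.2 < μ c.1 ∧
    -(a : ℤ) ≤ (a : ℤ) * armZ μ c.1 c.2 - (b : ℤ) * leg μ c.1 c.2 ∧
    (a : ℤ) * armZ μ c.1 c.2 - (b : ℤ) * leg μ c.1 c.2 < (b : ℤ)}.ncard

/-- for coprime positive `a, b` and `μ ∈ R(a,b)`, no cell `c` of
`μ` satisfies `a·arm(c) − b·leg(c) = −a` or `a·arm(c) − b·leg(c) = b`;
consequently `h⁺_{b,a}(μ) = h⁻_{b,a}(μ)`. -/
theorem stmt16 (a b : ℕ) (ha : 0 < a) (hb : 0 < b) (hab : Nat.Coprime a b)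
    (μ : ℕ → ℕ) (hμ : InBox a b μ) :
    (∀ i j : ℕ, j < μ i →
      (a : ℤ) * armZ μ i j - (b : ℤ) * leg μ i j ≠ -(a : ℤ) ∧
      (a : ℤ) * armZ μ i j - (b : ℤ) * leg μ i j ≠ (b : ℤ)) ∧
    hplus a b μ = hminus a b μ := by
  obtain ⟨hmono, hb0, hzero⟩ := hμ
  have hco : IsCoprime (a : ℤ) (b : ℤ) := Nat.isCoprime_iff_coprime.mpr hab
  have key : ∀ i j : ℕ, j < μ i →
      (a : ℤ) * armZ μ i j - (b : ℤ) * leg μ i j ≠ -(a : ℤ) ∧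
      (a : ℤ) * armZ μ i j - (b : ℤ) * leg μ i j ≠ (b : ℤ) := by
    intro i j hj
    have harm0 : 0 ≤ armZ μ i j := by unfold armZ; omega
    have harmb : armZ μ i j < (b : ℤ) := by
      have : μ i ≤ b := le_trans (hmono 0 i (Nat.zero_le i)) hb0
      unfold armZ; omega
    have hlega : leg μ i j < a := by
      have hsub : {i' : ℕ | i < i' ∧ j < μ i'} ⊆ Set.Ioo i a := by
        intro x hx
        obtain ⟨h1, h2⟩ := hx
        refine ⟨h1, ?_⟩
        by_contra h
        push_neg at h
        rw [hzero x h] at h2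
        omega
      have hle := Set.ncard_le_ncard hsub (Set.finite_Ioo i a)
      have hcard : (Set.Ioo i a).ncard = a - i - 1 := by
        rw [← Finset.coe_Ioo, Set.ncard_coe_finset, Nat.card_Ioo]
      unfold leg
      omega
    set A := armZ μ i j with hA
    set L : ℤ := (leg μ i j : ℤ) with hL
    have hL0 : 0 ≤ L := by positivity
    have hLa : L < (a : ℤ) := by rw [hL]; exact_mod_cast hlega
    constructor
    · intro heq
      have h1 : (a : ℤ) * (A + 1) = (b : ℤ) * L := by linarith
      have hdvd : (a : ℤ) ∣ (b : ℤ) * L := ⟨A + 1, by linarith⟩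
      have hdvdL : (a : ℤ) ∣ L := hco.dvd_of_dvd_mul_left hdvd
      have hLpos : 0 < L := by nlinarith
      have := Int.le_of_dvd hLpos hdvdL
      omega
    · intro heq
      have h1 : (a : ℤ) * A = (b : ℤ) * (L + 1) := by linarith
      have hdvd : (b : ℤ) ∣ (a : ℤ) * A := ⟨L + 1, by linarith⟩
      have hdvdA : (b : ℤ) ∣ A := hco.symm.dvd_of_dvd_mul_left hdvd
      have hApos : 0 < A := by nlinarith
      have := Int.le_of_dvd hApos hdvdA
      omega
  refine ⟨key, ?_⟩
  unfold hplus hminus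
  congr 1
  ext ⟨i, j⟩
  simp only [Set.mem_setOf_eq]
  constructor
  · rintro ⟨h1, h2, h3⟩
    obtain ⟨k1, k2⟩ := key i j h1
    set X := (a : ℤ) * armZ μ i j - (b : ℤ) * leg μ i j
    exact ⟨h1, by omega, by omega⟩
  · rintro ⟨h1, h2, h3⟩
    obtain ⟨k1, k2⟩ := key i j h1
    set X := (a : ℤ) * armZ μ i j - (b : ℤ) * leg μ i j
    exact ⟨h1, by omega, by omega⟩
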